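/- Define F_n(q) = Σ_{π ∈ Av_n(231,312,321)} q^{inv(π)} and G_n(v,q) = Σ_{π ∈ Av_n(231,312,4321,21543)} v^{Fib(π)} q^{inv(π)}. Then for all n ≥ 3, G_n(v,q) = F_n(q)·v^n + Σ_{j=0}^{n-3} q^3·v^j·F_j(q). -/

import Mathlib

open Finset MvPolynomial
open scoped Classical

/-- `π` contains the pattern given by the list `p` (one-line notation). -/
def ContainsPat {n : ℕ} (π : Equiv.Perm (Fin n)) (p : List ℕ) : Prop :=
  ∃ f : Fin p.length → Fin n, StrictMono f ∧
    ∀ i j : Fin p.length, p.get i < p.get j ↔ π (f i) < π (f j)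

/-- `π` avoids every pattern in the list `S`. -/
def AvoidsAll {n : ℕ} (π : Equiv.Perm (Fin n)) (S : List (List ℕ)) : Prop :=
  ∀ p ∈ S, ¬ ContainsPat π p

/-- Fibonacci numbers with the convention `F 0 = F 1 = 1`. -/
def fib' : ℕ → ℕ
  | 0 => 1
  | 1 => 1
  | n + 2 => fib' (n + 1) + fib' n

/-- number of inversions -/
def invNum {n : ℕ} (π : Equiv.Perm (Fin n)) : ℕ :=
  (Finset.univ.filter (fun p : Fin n × Fin n => p.1 < p.2 ∧ π p.2 < π p.1)).card

/-- The last `k` entries of `π` contain pattern `p`. -/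
def SegContainsPat {n : ℕ} (π : Equiv.Perm (Fin n)) (k : ℕ) (p : List ℕ) : Prop :=
  ∃ f : Fin p.length → Fin n, StrictMono f ∧ (∀ i, n - k ≤ ((f i : Fin n) : ℕ)) ∧
    ∀ i j : Fin p.length, p.get i < p.get j ↔ π (f i) < π (f j)

/-- The last `k` entries of `π` are the top `k` values and form a Fibonacci permutation. -/
def IsFinalFib {n : ℕ} (π : Equiv.Perm (Fin n)) (k : ℕ) : Prop :=
  k ≤ n ∧ (∀ i : Fin n, n - k ≤ (i : ℕ) → n - k ≤ ((π i : Fin n) : ℕ)) ∧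
    ∀ p ∈ [[2,3,1],[3,1,2],[3,2,1]], ¬ SegContainsPat π k p

/-- `Fib(π)`: length of the longest final segment of `π` consisting of the top values
and avoiding 231, 312, 321. -/
noncomputable def fibStat {n : ℕ} (π : Equiv.Perm (Fin n)) : ℕ := sSup {k | IsFinalFib π k}

/-- direct sum `π ⊕ σ` -/
def dsum {m n : ℕ} (π : Equiv.Perm (Fin m)) (σ : Equiv.Perm (Fin n)) :
    Equiv.Perm (Fin (m + n)) :=
  finSumFinEquiv.symm.trans ((Equiv.sumCongr π σ).trans finSumFinEquiv)

/-- skew sum `π ⊖ σ` -/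
def sskew {m n : ℕ} (π : Equiv.Perm (Fin m)) (σ : Equiv.Perm (Fin n)) :
    Equiv.Perm (Fin (m + n)) :=
  finSumFinEquiv.symm.trans ((Equiv.sumCongr π σ).trans
    ((Equiv.sumComm (Fin m) (Fin n)).trans (finSumFinEquiv.trans (finCongr (Nat.add_comm n m)))))

/-- the pattern 321 as a permutation of `Fin 3` -/
def perm321 : Equiv.Perm (Fin 3) := Fin.revPerm

/-- the pattern 312 as a permutation of `Fin 3` -/
def perm312 : Equiv.Perm (Fin 3) := (finRotate 3)⁻¹

/-- binomial coefficient on ℤ, zero when undefined -/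
def C (a b : ℤ) : ℤ := if 0 ≤ b ∧ b ≤ a then (a.toNat.choose b.toNat : ℤ) else 0

/-- generating function `G_n(v,q)` with `v = X 0`, `q = X 1` -/
noncomputable def G (n : ℕ) (S : List (List ℕ)) : MvPolynomial (Fin 2) ℤ :=
  ∑ π ∈ Finset.univ.filter (fun π : Equiv.Perm (Fin n) => AvoidsAll π S),
    X 0 ^ fibStat π * X 1 ^ invNum π

/-- Fibonacci generating function `F_n(q)` with `q = X 1` -/
noncomputable def Fq (n : ℕ) : MvPolynomial (Fin 2) ℤ :=
  ∑ π ∈ Finset.univ.filter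
      (fun π : Equiv.Perm (Fin n) => AvoidsAll π [[2,3,1],[3,1,2],[3,2,1]]),
    X 1 ^ invNum π

set_option maxRecDepth 4000

section Aux

/-- `π` as a function `ℕ → ℕ` (identity off `[0,n)`). -/
def pad {n : ℕ} (π : Equiv.Perm (Fin n)) : ℕ → ℕ :=
  fun i => if h : i < n then (π ⟨i, h⟩ : ℕ) else i

variable {n : ℕ}

lemma pad_lt (π : Equiv.Perm (Fin n)) {i : ℕ} (h : i < n) : pad π i < n := by
  simp only [pad, dif_pos h]; exact (π ⟨i, h⟩).isLt

lemma val_eq_pad (π : Equiv.Perm (Fin n)) (z : Fin n) : (π z : ℕ) = pad π (z : ℕ) := by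
  simp [pad, z.isLt]

lemma pad_inj (π : Equiv.Perm (Fin n)) {i j : ℕ} (h : pad π i = pad π j) : i = j := by
  unfold pad at h
  split_ifs at h with h1 h2 h2
  · exact congrArg Fin.val (π.injective (Fin.val_injective h))
  · exact absurd h (by have := (π ⟨i, h1⟩).isLt; omega)
  · exact absurd h (by have := (π ⟨j, h2⟩).isLt; omega)
  · exact h

lemma pad_surj (π : Equiv.Perm (Fin n)) {v : ℕ} (h : v < n) :
    ∃ i, i < n ∧ pad π i = v := by
  refine ⟨(π.symm ⟨v, h⟩ : ℕ), (π.symm ⟨v, h⟩).isLt, ?_⟩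
  simp [pad, (π.symm ⟨v, h⟩).isLt]

lemma pad_inv_pad (π : Equiv.Perm (Fin n)) {i : ℕ} (h : i < n) :
    pad π⁻¹ (pad π i) = i := by
  simp [pad, h, pad_lt π h]

lemma pad_pad_inv (π : Equiv.Perm (Fin n)) {v : ℕ} (h : v < n) :
    pad π (pad π⁻¹ v) = v := by
  simp [pad, h, pad_lt π⁻¹ h]

/-- translation of containment of a 3-letter pattern to `pad`-level. -/
lemma containsPat3_iff (π : Equiv.Perm (Fin n)) (x y z : ℕ)
    (hxy : x ≠ y) (hxz : x ≠ z) (hyz : y ≠ z) :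
    ContainsPat π [x, y, z] ↔
      ∃ i j k, i < j ∧ j < k ∧ k < n ∧
        (x < y ↔ pad π i < pad π j) ∧ (x < z ↔ pad π i < pad π k) ∧
        (y < z ↔ pad π j < pad π k) := by
  constructor
  · rintro ⟨f, hf, hcond⟩
    set i0 : Fin ([x,y,z].length) := ⟨0, by simp⟩
    set i1 : Fin ([x,y,z].length) := ⟨1, by simp⟩
    set i2 : Fin ([x,y,z].length) := ⟨2, by simp⟩
    have h01 : (f i0 : ℕ) < (f i1 : ℕ) := hf (Fin.mk_lt_mk.mpr (by norm_num))
    have h12 : (f i1 : ℕ) < (f i2 : ℕ) := hf (Fin.mk_lt_mk.mpr (by norm_num))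
    refine ⟨f i0, f i1, f i2, h01, h12, (f i2).isLt, ?_, ?_, ?_⟩
    · have := hcond i0 i1
      simpa [i0, i1, Fin.lt_def, val_eq_pad] using this
    · have := hcond i0 i2
      simpa [i0, i2, Fin.lt_def, val_eq_pad] using this
    · have := hcond i1 i2
      simpa [i1, i2, Fin.lt_def, val_eq_pad] using this
  · rintro ⟨i, j, k, hij, hjk, hkn, h1, h2, h3⟩
    have hin : i < n := by omega
    have hjn : j < n := by omega
    have e1 : (π ⟨i, hin⟩ : ℕ) = pad π i := val_eq_pad π ⟨i, hin⟩
    have e2 : (π ⟨j, hjn⟩ : ℕ) = pad π j := val_eq_pad π ⟨j, hjn⟩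
    have e3 : (π ⟨k, hkn⟩ : ℕ) = pad π k := val_eq_pad π ⟨k, hkn⟩
    have n1 : pad π i ≠ pad π j := fun h => by have := pad_inj π h; omega
    have n2 : pad π i ≠ pad π k := fun h => by have := pad_inj π h; omega
    have n3 : pad π j ≠ pad π k := fun h => by have := pad_inj π h; omega
    refine ⟨![⟨i, hin⟩, ⟨j, hjn⟩, ⟨k, hkn⟩], ?_, ?_⟩
    · intro u v huv
      fin_cases u <;> fin_cases v <;>
        simp_all [Fin.lt_def] <;> omega
    · intro u v
      fin_cases u <;> fin_cases v <;>
        simp_all [Fin.lt_def] <;> omega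

lemma containsPat_ofFn {m : ℕ} (π : Equiv.Perm (Fin n)) (x : Fin m → ℕ) (w : Fin m → Fin n)
    (hw : StrictMono w) (hc : ∀ u v, x u < x v ↔ π (w u) < π (w v)) :
    ContainsPat π (List.ofFn x) := by
  refine ⟨fun u => w (Fin.cast (List.length_ofFn (f := x)) u), ?_, ?_⟩
  · intro a b hab
    exact hw hab
  · intro u v
    rw [List.get_ofFn, List.get_ofFn]
    exact hc _ _

lemma containsPat4321_iff (π : Equiv.Perm (Fin n)) :
    ContainsPat π [4,3,2,1] ↔
      ∃ i j k l, i < j ∧ j < k ∧ k < l ∧ l < n ∧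
        pad π l < pad π k ∧ pad π k < pad π j ∧ pad π j < pad π i := by
  constructor
  · rintro ⟨f, hf, hcond⟩
    set i0 : Fin ([4,3,2,1] : List ℕ).length := ⟨0, by simp⟩
    set i1 : Fin ([4,3,2,1] : List ℕ).length := ⟨1, by simp⟩
    set i2 : Fin ([4,3,2,1] : List ℕ).length := ⟨2, by simp⟩
    set i3 : Fin ([4,3,2,1] : List ℕ).length := ⟨3, by simp⟩
    have h01 : (f i0 : ℕ) < (f i1 : ℕ) := hf (Fin.mk_lt_mk.mpr (by norm_num))
    have h12 : (f i1 : ℕ) < (f i2 : ℕ) := hf (Fin.mk_lt_mk.mpr (by norm_num))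
    have h23 : (f i2 : ℕ) < (f i3 : ℕ) := hf (Fin.mk_lt_mk.mpr (by norm_num))
    have c01 := hcond i0 i1
    have c12 := hcond i1 i2
    have c23 := hcond i2 i3
    rw [show ([4,3,2,1] : List ℕ).get i0 = 4 from rfl,
        show ([4,3,2,1] : List ℕ).get i1 = 3 from rfl,
        Fin.lt_def, val_eq_pad, val_eq_pad] at c01
    rw [show ([4,3,2,1] : List ℕ).get i1 = 3 from rfl,
        show ([4,3,2,1] : List ℕ).get i2 = 2 from rfl,
        Fin.lt_def, val_eq_pad, val_eq_pad] at c12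
    rw [show ([4,3,2,1] : List ℕ).get i2 = 2 from rfl,
        show ([4,3,2,1] : List ℕ).get i3 = 1 from rfl,
        Fin.lt_def, val_eq_pad, val_eq_pad] at c23
    have n01 : pad π (f i0 : ℕ) ≠ pad π (f i1 : ℕ) := fun h => by
      have := pad_inj π h; omega
    have n12 : pad π (f i1 : ℕ) ≠ pad π (f i2 : ℕ) := fun h => by
      have := pad_inj π h; omega
    have n23 : pad π (f i2 : ℕ) ≠ pad π (f i3 : ℕ) := fun h => by
      have := pad_inj π h; omega
    exact ⟨f i0, f i1, f i2, f i3, h01, h12, h23, (f i3).isLt, by omega, by omega, by omega⟩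
  · rintro ⟨i, j, k, l, hij, hjk, hkl, hln, v1, v2, v3⟩
    have hin : i < n := by omega
    have hjn : j < n := by omega
    have hkn : k < n := by omega
    have e1 : (π ⟨i, hin⟩ : ℕ) = pad π i := val_eq_pad π ⟨i, hin⟩
    have e2 : (π ⟨j, hjn⟩ : ℕ) = pad π j := val_eq_pad π ⟨j, hjn⟩
    have e3 : (π ⟨k, hkn⟩ : ℕ) = pad π k := val_eq_pad π ⟨k, hkn⟩
    have e4 : (π ⟨l, hln⟩ : ℕ) = pad π l := val_eq_pad π ⟨l, hln⟩
    rw [show ([4,3,2,1] : List ℕ) = List.ofFn (![4,3,2,1] : Fin 4 → ℕ) from by decide]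
    refine containsPat_ofFn π _ ![⟨i, hin⟩, ⟨j, hjn⟩, ⟨k, hkn⟩, ⟨l, hln⟩] ?_ ?_
    · intro a b hab
      fin_cases a <;> fin_cases b <;> simp_all [Fin.lt_def] <;> omega
    · intro u v
      fin_cases u <;> fin_cases v <;> simp_all [Fin.lt_def] <;> omega

set_option maxHeartbeats 2000000 in
lemma containsPat21543_iff (π : Equiv.Perm (Fin n)) :
    ContainsPat π [2,1,5,4,3] ↔
      ∃ b1 b2 b3 b4 b5, b1 < b2 ∧ b2 < b3 ∧ b3 < b4 ∧ b4 < b5 ∧ b5 < n ∧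
        pad π b2 < pad π b1 ∧ pad π b1 < pad π b5 ∧ pad π b5 < pad π b4 ∧
        pad π b4 < pad π b3 := by
  constructor
  · rintro ⟨f, hf, hcond⟩
    set i0 : Fin ([2,1,5,4,3] : List ℕ).length := ⟨0, by simp⟩
    set i1 : Fin ([2,1,5,4,3] : List ℕ).length := ⟨1, by simp⟩
    set i2 : Fin ([2,1,5,4,3] : List ℕ).length := ⟨2, by simp⟩
    set i3 : Fin ([2,1,5,4,3] : List ℕ).length := ⟨3, by simp⟩
    set i4 : Fin ([2,1,5,4,3] : List ℕ).length := ⟨4, by simp⟩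
    have h01 : (f i0 : ℕ) < (f i1 : ℕ) := hf (Fin.mk_lt_mk.mpr (by norm_num))
    have h12 : (f i1 : ℕ) < (f i2 : ℕ) := hf (Fin.mk_lt_mk.mpr (by norm_num))
    have h23 : (f i2 : ℕ) < (f i3 : ℕ) := hf (Fin.mk_lt_mk.mpr (by norm_num))
    have h34 : (f i3 : ℕ) < (f i4 : ℕ) := hf (Fin.mk_lt_mk.mpr (by norm_num))
    have c01 := hcond i0 i1
    have c04 := hcond i0 i4
    have c34 := hcond i3 i4
    have c23 := hcond i2 i3
    rw [show ([2,1,5,4,3] : List ℕ).get i0 = 2 from rfl,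
        show ([2,1,5,4,3] : List ℕ).get i1 = 1 from rfl,
        Fin.lt_def, val_eq_pad, val_eq_pad] at c01
    rw [show ([2,1,5,4,3] : List ℕ).get i0 = 2 from rfl,
        show ([2,1,5,4,3] : List ℕ).get i4 = 3 from rfl,
        Fin.lt_def, val_eq_pad, val_eq_pad] at c04
    rw [show ([2,1,5,4,3] : List ℕ).get i3 = 4 from rfl,
        show ([2,1,5,4,3] : List ℕ).get i4 = 3 from rfl,
        Fin.lt_def, val_eq_pad, val_eq_pad] at c34
    rw [show ([2,1,5,4,3] : List ℕ).get i2 = 5 from rfl,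
        show ([2,1,5,4,3] : List ℕ).get i3 = 4 from rfl,
        Fin.lt_def, val_eq_pad, val_eq_pad] at c23
    have n01 : pad π (f i0 : ℕ) ≠ pad π (f i1 : ℕ) := fun h => by
      have := pad_inj π h; omega
    have n34 : pad π (f i3 : ℕ) ≠ pad π (f i4 : ℕ) := fun h => by
      have := pad_inj π h; omega
    have n23 : pad π (f i2 : ℕ) ≠ pad π (f i3 : ℕ) := fun h => by
      have := pad_inj π h; omega
    exact ⟨f i0, f i1, f i2, f i3, f i4, h01, h12, h23, h34, (f i4).isLt,
      by omega, by omega, by omega, by omega⟩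
  · rintro ⟨b1, b2, b3, b4, b5, h12, h23, h34, h45, h5n, v1, v2, v3, v4⟩
    have h1n : b1 < n := by omega
    have h2n : b2 < n := by omega
    have h3n : b3 < n := by omega
    have h4n : b4 < n := by omega
    have e1 : (π ⟨b1, h1n⟩ : ℕ) = pad π b1 := val_eq_pad π ⟨b1, h1n⟩
    have e2 : (π ⟨b2, h2n⟩ : ℕ) = pad π b2 := val_eq_pad π ⟨b2, h2n⟩
    have e3 : (π ⟨b3, h3n⟩ : ℕ) = pad π b3 := val_eq_pad π ⟨b3, h3n⟩
    have e4 : (π ⟨b4, h4n⟩ : ℕ) = pad π b4 := val_eq_pad π ⟨b4, h4n⟩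
    have e5 : (π ⟨b5, h5n⟩ : ℕ) = pad π b5 := val_eq_pad π ⟨b5, h5n⟩
    rw [show ([2,1,5,4,3] : List ℕ) = List.ofFn (![2,1,5,4,3] : Fin 5 → ℕ) from by decide]
    have w0 : (![⟨b1,h1n⟩,⟨b2,h2n⟩,⟨b3,h3n⟩,⟨b4,h4n⟩,⟨b5,h5n⟩] : Fin 5 → Fin n) ⟨0, by omega⟩ = ⟨b1,h1n⟩ := rfl
    have w1 : (![⟨b1,h1n⟩,⟨b2,h2n⟩,⟨b3,h3n⟩,⟨b4,h4n⟩,⟨b5,h5n⟩] : Fin 5 → Fin n) ⟨1, by omega⟩ = ⟨b2,h2n⟩ := rfl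
    have w2 : (![⟨b1,h1n⟩,⟨b2,h2n⟩,⟨b3,h3n⟩,⟨b4,h4n⟩,⟨b5,h5n⟩] : Fin 5 → Fin n) ⟨2, by omega⟩ = ⟨b3,h3n⟩ := rfl
    have w3 : (![⟨b1,h1n⟩,⟨b2,h2n⟩,⟨b3,h3n⟩,⟨b4,h4n⟩,⟨b5,h5n⟩] : Fin 5 → Fin n) ⟨3, by omega⟩ = ⟨b4,h4n⟩ := rfl
    have w4 : (![⟨b1,h1n⟩,⟨b2,h2n⟩,⟨b3,h3n⟩,⟨b4,h4n⟩,⟨b5,h5n⟩] : Fin 5 → Fin n) ⟨4, by omega⟩ = ⟨b5,h5n⟩ := rfl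
    have x0 : (![2,1,5,4,3] : Fin 5 → ℕ) ⟨0, by omega⟩ = 2 := rfl
    have x1 : (![2,1,5,4,3] : Fin 5 → ℕ) ⟨1, by omega⟩ = 1 := rfl
    have x2 : (![2,1,5,4,3] : Fin 5 → ℕ) ⟨2, by omega⟩ = 5 := rfl
    have x3 : (![2,1,5,4,3] : Fin 5 → ℕ) ⟨3, by omega⟩ = 4 := rfl
    have x4 : (![2,1,5,4,3] : Fin 5 → ℕ) ⟨4, by omega⟩ = 3 := rfl
    refine containsPat_ofFn π _ ![⟨b1, h1n⟩, ⟨b2, h2n⟩, ⟨b3, h3n⟩, ⟨b4, h4n⟩, ⟨b5, h5n⟩] ?_ ?_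
    · intro a b hab
      fin_cases a <;> fin_cases b <;>
        (simp only [w0, w1, w2, w3, w4, Fin.mk_lt_mk] at hab ⊢ <;> omega)
    · intro u v
      fin_cases u <;> fin_cases v <;>
        (simp only [w0, w1, w2, w3, w4, x0, x1, x2, x3, x4, Fin.lt_def, Fin.mk_lt_mk,
           e1, e2, e3, e4, e5] <;> omega)

/-- translation of segment-containment of a 3-letter pattern. -/
lemma segContainsPat3_iff (π : Equiv.Perm (Fin n)) (K : ℕ) (x y z : ℕ)
    (hxy : x ≠ y) (hxz : x ≠ z) (hyz : y ≠ z) :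
    SegContainsPat π K [x, y, z] ↔
      ∃ i j k, n - K ≤ i ∧ i < j ∧ j < k ∧ k < n ∧
        (x < y ↔ pad π i < pad π j) ∧ (x < z ↔ pad π i < pad π k) ∧
        (y < z ↔ pad π j < pad π k) := by
  constructor
  · rintro ⟨f, hf, hbd, hcond⟩
    set i0 : Fin ([x,y,z].length) := ⟨0, by simp⟩
    set i1 : Fin ([x,y,z].length) := ⟨1, by simp⟩
    set i2 : Fin ([x,y,z].length) := ⟨2, by simp⟩
    have h01 : (f i0 : ℕ) < (f i1 : ℕ) := hf (Fin.mk_lt_mk.mpr (by norm_num))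
    have h12 : (f i1 : ℕ) < (f i2 : ℕ) := hf (Fin.mk_lt_mk.mpr (by norm_num))
    refine ⟨f i0, f i1, f i2, hbd i0, h01, h12, (f i2).isLt, ?_, ?_, ?_⟩
    · have := hcond i0 i1
      simpa [i0, i1, Fin.lt_def, val_eq_pad] using this
    · have := hcond i0 i2
      simpa [i0, i2, Fin.lt_def, val_eq_pad] using this
    · have := hcond i1 i2
      simpa [i1, i2, Fin.lt_def, val_eq_pad] using this
  · rintro ⟨i, j, k, hbd, hij, hjk, hkn, h1, h2, h3⟩
    have hin : i < n := by omega
    have hjn : j < n := by omega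
    have e1 : (π ⟨i, hin⟩ : ℕ) = pad π i := val_eq_pad π ⟨i, hin⟩
    have e2 : (π ⟨j, hjn⟩ : ℕ) = pad π j := val_eq_pad π ⟨j, hjn⟩
    have e3 : (π ⟨k, hkn⟩ : ℕ) = pad π k := val_eq_pad π ⟨k, hkn⟩
    have n1 : pad π i ≠ pad π j := fun h => by have := pad_inj π h; omega
    have n2 : pad π i ≠ pad π k := fun h => by have := pad_inj π h; omega
    have n3 : pad π j ≠ pad π k := fun h => by have := pad_inj π h; omega
    refine ⟨![⟨i, hin⟩, ⟨j, hjn⟩, ⟨k, hkn⟩], ?_, ?_, ?_⟩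
    · intro u v huv
      fin_cases u <;> fin_cases v <;> simp_all [Fin.lt_def] <;> omega
    · intro u
      fin_cases u <;> simp_all <;> omega
    · intro u v
      fin_cases u <;> fin_cases v <;> simp_all [Fin.lt_def] <;> omega

/-- unit-descent property -/
def UD {n : ℕ} (π : Equiv.Perm (Fin n)) : Prop :=
  ∀ i, i + 1 < n → pad π (i+1) < pad π i → pad π i = pad π (i+1) + 1

/-- descent at `i` -/
def Dsc {n : ℕ} (π : Equiv.Perm (Fin n)) (i : ℕ) : Prop :=
  i + 1 < n ∧ pad π (i+1) < pad π i

def NoTriple {n : ℕ} (π : Equiv.Perm (Fin n)) : Prop :=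
  ∀ m, ¬ (Dsc π m ∧ Dsc π (m+1) ∧ Dsc π (m+2))

def NoDouble {n : ℕ} (π : Equiv.Perm (Fin n)) : Prop :=
  ∀ m, ¬ (Dsc π m ∧ Dsc π (m+1))

def NoW {n : ℕ} (π : Equiv.Perm (Fin n)) : Prop :=
  ∀ i j, i < j → ¬ (Dsc π i ∧ Dsc π j ∧ Dsc π (j+1))

lemma lemmaM {π : Equiv.Perm (Fin n)} (hUD : UD π) {m : ℕ} (hm : m + 1 < n)
    (ha : pad π m < pad π (m+1)) : ∀ l, m < l → l < n → pad π m < pad π l := by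
  intro l
  induction l using Nat.strong_induction_on with
  | _ l ih =>
    intro hml hln
    rcases Nat.lt_or_ge (m+1) l with h | h
    · have hl1 : pad π m < pad π (l-1) := by
        have := ih (l-1) (by omega) (by omega) (by omega)
        exact this
      rcases Nat.lt_or_ge (pad π l) (pad π (l-1)) with hd | hd
      · have := hUD (l-1) (by omega) (by rwa [show l - 1 + 1 = l by omega])
        rw [show l - 1 + 1 = l by omega] at this
        have hne : pad π m ≠ pad π l := fun h => by have := pad_inj π h; omega
        omega
      · have hne : pad π (l-1) ≠ pad π l := fun h => by have := pad_inj π h; omega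
        omega
    · have : l = m + 1 := by omega
      subst this; exact ha

lemma lemmaMc {π : Equiv.Perm (Fin n)} (hUD : UD π) {i l : ℕ} (hil : i < l) (hl : l < n)
    (hv : pad π l < pad π i) : Dsc π i := by
  have h1 : i + 1 < n := by
    rcases Nat.lt_or_ge (i+1) n with h | h
    · exact h
    · have : l = i + 1 ∨ n ≤ l := by omega
      omega
  refine ⟨h1, ?_⟩
  by_contra hnd
  push_neg at hnd
  have hne : pad π i ≠ pad π (i+1) := fun h => by have := pad_inj π h; omega
  have hlt : pad π i < pad π (i+1) := by omega
  have := lemmaM hUD h1 hlt l hil hl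
  omega

lemma boundary (Q : ℕ → Prop) {j k : ℕ} (hjk : j ≤ k) (hj : Q j) (hk : ¬ Q k) :
    ∃ m, j ≤ m ∧ m < k ∧ Q m ∧ ¬ Q (m+1) := by
  by_contra hcon
  push_neg at hcon
  apply hk
  have : ∀ l, j ≤ l → l ≤ k → Q l := by
    intro l hjl
    induction l, hjl using Nat.le_induction with
    | base => intro _; exact hj
    | succ m hm ih =>
      intro hmk
      exact hcon m hm (by omega) (ih (by omega))
  exact this k hjk le_rfl

/-- C1: avoiding 231 and 312 is exactly the unit-descent property -/
lemma ud_iff (π : Equiv.Perm (Fin n)) :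
    (¬ ContainsPat π [2,3,1] ∧ ¬ ContainsPat π [3,1,2]) ↔ UD π := by
  constructor
  · rintro ⟨h231, h312⟩
    intro m hm hd
    by_contra hne
    have hgap : pad π (m+1) + 2 ≤ pad π m := by omega
    have hbn : pad π (m+1) + 1 < n := by have := pad_lt π (show m < n by omega); omega
    obtain ⟨w, hw, hwb⟩ := pad_surj π hbn
    have hwm : w ≠ m := fun h => by subst h; omega
    have hwm1 : w ≠ m + 1 := fun h => by subst h; omega
    rcases Nat.lt_or_ge w m with hlt | hge
    · exact h231 ((containsPat3_iff π 2 3 1 (by norm_num) (by norm_num) (by norm_num)).2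
        ⟨w, m, m+1, hlt, by omega, hm, by omega, by omega, by omega⟩)
    · have hgt : m + 1 < w := by omega
      exact h312 ((containsPat3_iff π 3 1 2 (by norm_num) (by norm_num) (by norm_num)).2
        ⟨m, m+1, w, by omega, hgt, by omega, by omega, by omega, by omega⟩)
  · intro hUD
    constructor
    · intro hc
      obtain ⟨i, j, k, hij, hjk, hkn, c1, c2, c3⟩ :=
        (containsPat3_iff π 2 3 1 (by norm_num) (by norm_num) (by norm_num)).1 hc
      have nik : pad π i ≠ pad π k := fun h => by have := pad_inj π h; omega
      have njk : pad π j ≠ pad π k := fun h => by have := pad_inj π h; omega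
      have v1 : pad π i < pad π j := by omega
      have v2 : pad π k < pad π i := by omega
      have v3 : pad π k < pad π j := by omega
      obtain ⟨m, hm1, hm2, hm3, hm4⟩ := boundary (fun m => pad π i < pad π m)
        (le_of_lt hjk) v1 (by omega)
      have hmi : m + 1 ≠ i := by omega
      have hne : pad π (m+1) ≠ pad π i := fun h => by have := pad_inj π h; omega
      have := hUD m (by omega) (by omega)
      omega
    · intro hc
      obtain ⟨i, j, k, hij, hjk, hkn, c1, c2, c3⟩ :=
        (containsPat3_iff π 3 1 2 (by norm_num) (by norm_num) (by norm_num)).1 hc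
      have nij : pad π i ≠ pad π j := fun h => by have := pad_inj π h; omega
      have nik : pad π i ≠ pad π k := fun h => by have := pad_inj π h; omega
      have v1 : pad π j < pad π i := by omega
      have v2 : pad π k < pad π i := by omega
      have v3 : pad π j < pad π k := by omega
      obtain ⟨m, hm1, hm2, hm3, hm4⟩ := boundary (fun m => pad π k < pad π m)
        (le_of_lt hij) (by omega) (by omega)
      have hmk : m + 1 ≠ k := by omega
      have hne : pad π (m+1) ≠ pad π k := fun h => by have := pad_inj π h; omega
      have := hUD m (by omega) (by omega)
      omega

lemma lemmaM2 {π : Equiv.Perm (Fin n)} (hUD : UD π) (hB : NoTriple π) :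
    ∀ m l, m < l → l < n → pad π m ≤ pad π l + 2 := by
  intro m l hml hln
  have hm1 : m + 1 < n := by omega
  rcases Nat.lt_or_ge (pad π (m+1)) (pad π m) with hd | hd
  · -- descent at m
    have hu1 := hUD m hm1 hd
    rcases Nat.lt_or_ge (m+1) l with h1 | h1
    · have hm2 : m + 2 < n := by omega
      rcases Nat.lt_or_ge (pad π (m+2)) (pad π (m+1)) with hd2 | hd2
      · have hu2 := hUD (m+1) hm2 hd2
        rw [show m+1+1 = m+2 from rfl] at hu2
        rcases Nat.lt_or_ge (m+2) l with h2 | h2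
        · have hm3 : m + 3 < n := by omega
          have hnd3 : ¬ (pad π (m+3) < pad π (m+2)) := by
            intro hd3
            exact hB m ⟨⟨hm1, hd⟩, ⟨hm2, hd2⟩, ⟨hm3, hd3⟩⟩
          have hne : pad π (m+2) ≠ pad π (m+3) := fun h => by have := pad_inj π h; omega
          have := lemmaM hUD (show (m+2)+1 < n from hm3)
            (show pad π (m+2) < pad π (m+2+1) by rw [show m+2+1 = m+3 from rfl]; omega)
            l (by omega) hln
          omega
        · have he : l = m + 2 := by omega
          subst he; omega
      · have hne : pad π (m+1) ≠ pad π (m+2) := fun h => by have := pad_inj π h; omega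
        have := lemmaM hUD (show (m+1)+1 < n from hm2)
          (show pad π (m+1) < pad π (m+1+1) by rw [show m+1+1 = m+2 from rfl]; omega)
          l (by omega) hln
        omega
    · have he : l = m + 1 := by omega
      subst he; omega
  · have hne : pad π m ≠ pad π (m+1) := fun h => by have := pad_inj π h; omega
    have := lemmaM hUD hm1 (by omega) l hml hln
    omega

/-- C2: given UD, avoiding 4321 is exactly having no triple descent -/
lemma noTriple_iff {π : Equiv.Perm (Fin n)} (hUD : UD π) :
    NoTriple π ↔ ¬ ContainsPat π [4,3,2,1] := by
  constructor
  · intro hB hc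
    obtain ⟨i, j, k, l, hij, hjk, hkl, hln, v1, v2, v3⟩ := (containsPat4321_iff π).1 hc
    have := lemmaM2 hUD hB i l (by omega) hln
    omega
  · rintro hc m ⟨⟨h1, d1⟩, ⟨h2, d2⟩, ⟨h3, d3⟩⟩
    have d2' : pad π (m+2) < pad π (m+1) := d2
    have d3' : pad π (m+3) < pad π (m+2) := d3
    have h3' : m + 3 < n := h3
    exact hc ((containsPat4321_iff π).2
      ⟨m, m+1, m+2, m+3, by omega, by omega, by omega, h3', d3', d2', d1⟩)

/-- C4: given UD, avoiding 321 is exactly having no double descent -/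
lemma noDouble_iff {π : Equiv.Perm (Fin n)} (hUD : UD π) :
    NoDouble π ↔ ¬ ContainsPat π [3,2,1] := by
  constructor
  · intro hD hc
    obtain ⟨i, j, k, hij, hjk, hkn, c1, c2, c3⟩ :=
      (containsPat3_iff π 3 2 1 (by norm_num) (by norm_num) (by norm_num)).1 hc
    have nij : pad π i ≠ pad π j := fun h => by have := pad_inj π h; omega
    have njk : pad π j ≠ pad π k := fun h => by have := pad_inj π h; omega
    have v1 : pad π j < pad π i := by omega
    have v2 : pad π k < pad π j := by omega
    have d1 : Dsc π i := lemmaMc hUD hij (by omega) v1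
    have hu1 := hUD i d1.1 d1.2
    have d2 : Dsc π (i+1) := by
      rcases Nat.lt_or_ge (i+1) j with h | h
      · have hne : pad π j ≠ pad π (i+1) := fun h' => by have := pad_inj π h'; omega
        exact lemmaMc hUD h (by omega) (by omega)
      · have : j = i + 1 := by omega
        subst this
        exact lemmaMc hUD hjk hkn v2
    exact hD i ⟨d1, d2⟩
  · rintro hc m ⟨⟨h1, d1⟩, ⟨h2, d2⟩⟩
    have d2' : pad π (m+2) < pad π (m+1) := d2
    have h2' : m + 2 < n := h2
    exact hc ((containsPat3_iff π 3 2 1 (by norm_num) (by norm_num) (by norm_num)).2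
      ⟨m, m+1, m+2, by omega, by omega, h2', by omega, by omega, by omega⟩)

/-- C3: given UD and NoTriple, avoiding 21543 is exactly NoW -/
lemma noW_iff {π : Equiv.Perm (Fin n)} (hUD : UD π) (hB : NoTriple π) :
    NoW π ↔ ¬ ContainsPat π [2,1,5,4,3] := by
  constructor
  · intro hW hc
    obtain ⟨b1, b2, b3, b4, b5, h12, h23, h34, h45, h5n, v1, v2, v3, v4⟩ :=
      (containsPat21543_iff π).1 hc
    have d1 : Dsc π b1 := lemmaMc hUD h12 (by omega) v1
    have d3 : Dsc π b3 := lemmaMc hUD h34 (by omega) v4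
    have hu3 := hUD b3 d3.1 d3.2
    have d3' : Dsc π (b3+1) := by
      rcases Nat.lt_or_ge (b3+1) b4 with h | h
      · have hne : pad π b4 ≠ pad π (b3+1) := fun h' => by have := pad_inj π h'; omega
        exact lemmaMc hUD h (by omega) (by omega)
      · have : b4 = b3 + 1 := by omega
        subst this
        exact lemmaMc hUD h45 h5n (by omega)
    exact hW b1 b3 (by omega) ⟨d1, d3, d3'⟩
  · rintro hc i j hij ⟨di, dj, dj1⟩
    -- find i' with descent at i', ascent at i'+1, i' < j
    have key : ∀ i', i' < j → Dsc π i' → ¬ Dsc π (i'+1) → False := by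
      intro i' hi'j di' ni'
      have hu := hUD i' di'.1 di'.2
      have hj1 := hUD j dj.1 dj.2
      have hj2 : pad π (j+1) = pad π (j+2) + 1 := hUD (j+1) dj1.1 dj1.2
      have dj1' : pad π (j+2) < pad π (j+1) := dj1.2
      have hj2n : j + 2 < n := dj1.1
      -- i' + 1 < j since descent at j but not at i'+1
      have hne : i' + 1 ≠ j := fun h => ni' (h ▸ dj)
      have hlt : i' + 1 < j := by omega
      -- ascent at i'+1 (or boundary; boundary impossible since j+2 < n)
      have ha : pad π (i'+1) < pad π (i'+2) := by
        have h2n : i' + 2 < n := by have := dj1.1; omega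
        have hne2 : pad π (i'+1) ≠ pad π (i'+2) := fun h => by have := pad_inj π h; omega
        have : ¬ pad π (i'+2) < pad π (i'+1) := fun h => ni' ⟨h2n, h⟩
        omega
      have hM := lemmaM hUD (show i'+1+1 < n by have := dj1.1; omega) ha (j+2)
        (by omega) dj1.1
      have hne3 : pad π (j+2) ≠ pad π i' := fun h => by have := pad_inj π h; omega
      apply hc
      exact (containsPat21543_iff π).2
        ⟨i', i'+1, j, j+1, j+2, by omega, hlt, by omega, by omega, dj1.1,
          by omega, by omega, by omega, by omega⟩
    rcases Nat.lt_or_ge (i+1) n with hi1n | hi1n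
    · by_cases hdi1 : Dsc π (i+1)
      · -- then no descent at i+2 by NoTriple
        have ni2 : ¬ Dsc π (i+2) := fun h => hB i ⟨di, hdi1, h⟩
        have hij2 : i + 1 < j := by
          have h1 : i + 1 ≠ j := by
            intro h
            apply hB i
            refine ⟨di, ?_, ?_⟩
            · rw [h]; exact dj
            · rw [show i+1+1 = j+1 by omega]; exact dj1
          have h2 : i + 2 ≠ j := by
            intro h
            exact ni2 (by rw [h]; exact dj)
          rcases Nat.lt_or_ge (i+1) j with h | h
          · exact h
          · omega
        exact key (i+1) (by omega) hdi1 (by rw [show i+1+1 = i+2 by omega]; exact ni2)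
      · exact key i hij di hdi1
    · have := di.1; omega

def efun (a t : ℕ) {n : ℕ} (h : a + 3 + t = n) (σ : Equiv.Perm (Fin t)) (i : Fin n) :
    Fin n :=
  if h1 : (i : ℕ) < a then i
  else if h2 : (i : ℕ) < a + 3 then ⟨2*a + 2 - (i : ℕ), by omega⟩
  else
    have hx : (i : ℕ) - (a+3) < t := by have := i.isLt; omega
    let x : Fin t := ⟨(i : ℕ) - (a+3), hx⟩
    ⟨a + 3 + (σ x : ℕ), by have := (σ x).isLt; omega⟩

lemma efun_val_lo {a t : ℕ} (h : a + 3 + t = n) (σ : Equiv.Perm (Fin t)) (i : Fin n)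
    (h1 : (i : ℕ) < a) : (efun a t h σ i : ℕ) = i := by
  simp [efun, h1]

lemma efun_val_mid {a t : ℕ} (h : a + 3 + t = n) (σ : Equiv.Perm (Fin t)) (i : Fin n)
    (h1 : a ≤ (i : ℕ)) (h2 : (i : ℕ) < a + 3) :
    (efun a t h σ i : ℕ) = 2*a + 2 - (i : ℕ) := by
  rw [efun, dif_neg (by omega), dif_pos h2]

lemma efun_val_hi {a t : ℕ} (h : a + 3 + t = n) (σ : Equiv.Perm (Fin t)) (i : Fin n)
    (k : Fin t) (hk : (i : ℕ) = a + 3 + (k : ℕ)) :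
    (efun a t h σ i : ℕ) = a + 3 + (σ k : ℕ) := by
  rw [efun, dif_neg (by omega), dif_neg (by omega)]
  have hxk : (⟨(i : ℕ) - (a + 3), by have := i.isLt; omega⟩ : Fin t) = k := by
    apply Fin.ext; simp; omega
  simp [hxk]

lemma efun_left_inv {a t : ℕ} (h : a + 3 + t = n) (σ : Equiv.Perm (Fin t)) :
    ∀ i, efun a t h σ⁻¹ (efun a t h σ i) = i := by
  intro i
  by_cases h1 : (i : ℕ) < a
  · have e1 : (efun a t h σ i : ℕ) = i := efun_val_lo h σ i h1
    have e2 : (efun a t h σ⁻¹ (efun a t h σ i) : ℕ) = (efun a t h σ i : ℕ) :=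
      efun_val_lo h σ⁻¹ _ (by omega)
    exact Fin.ext (by omega)
  · by_cases h2 : (i : ℕ) < a + 3
    · have e1 : (efun a t h σ i : ℕ) = 2*a + 2 - (i : ℕ) :=
        efun_val_mid h σ i (by omega) h2
    
      have e2 : (efun a t h σ⁻¹ (efun a t h σ i) : ℕ) = 2*a + 2 - (efun a t h σ i : ℕ) :=
        efun_val_mid h σ⁻¹ _ (by omega) (by omega)
      exact Fin.ext (by omega)
    · set k : Fin t := ⟨(i : ℕ) - (a+3), by have := i.isLt; omega⟩ with hkdef
      have e1 : (efun a t h σ i : ℕ) = a + 3 + (σ k : ℕ) :=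
        efun_val_hi h σ i k (by simp [hkdef]; omega)
      have e2 : (efun a t h σ⁻¹ (efun a t h σ i) : ℕ) = a + 3 + (σ⁻¹ (σ k) : ℕ) :=
        efun_val_hi h σ⁻¹ _ (σ k) e1
      rw [show σ⁻¹ (σ k) = k from σ.symm_apply_apply k] at e2
      have : (k : ℕ) = (i : ℕ) - (a+3) := by rw [hkdef]
      exact Fin.ext (by omega)

def eperm (a t : ℕ) {n : ℕ} (h : a + 3 + t = n) (σ : Equiv.Perm (Fin t)) :
    Equiv.Perm (Fin n) where
  toFun := efun a t h σ
  invFun := efun a t h σ⁻¹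
  left_inv := efun_left_inv h σ
  right_inv := fun i => by
    have := efun_left_inv h σ⁻¹ i
    rwa [inv_inv] at this

lemma pad_eperm_lo {a t : ℕ} (h : a + 3 + t = n) (σ : Equiv.Perm (Fin t)) {i : ℕ}
    (hi : i < a) : pad (eperm a t h σ) i = i := by
  have hin : i < n := by omega
  rw [pad, dif_pos hin]
  exact efun_val_lo h σ ⟨i, hin⟩ hi

lemma pad_eperm_mid {a t : ℕ} (h : a + 3 + t = n) (σ : Equiv.Perm (Fin t)) {i : ℕ}
    (h1 : a ≤ i) (h2 : i < a + 3) : pad (eperm a t h σ) i = 2*a + 2 - i := by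
  have hin : i < n := by omega
  rw [pad, dif_pos hin]
  exact efun_val_mid h σ ⟨i, hin⟩ h1 h2

lemma pad_eperm_hi {a t : ℕ} (h : a + 3 + t = n) (σ : Equiv.Perm (Fin t)) {k : ℕ}
    (hk : k < t) : pad (eperm a t h σ) (a + 3 + k) = a + 3 + pad σ k := by
  have hin : a + 3 + k < n := by omega
  rw [pad, dif_pos hin, pad, dif_pos hk]
  exact efun_val_hi h σ ⟨a+3+k, hin⟩ ⟨k, hk⟩ rfl

lemma pad_eperm_hi' {a t : ℕ} (h : a + 3 + t = n) (σ : Equiv.Perm (Fin t)) {i : ℕ}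
    (h1 : a + 3 ≤ i) (h2 : i < n) :
    pad (eperm a t h σ) i = a + 3 + pad σ (i - (a+3)) := by
  have := pad_eperm_hi h σ (k := i - (a+3)) (by omega)
  rwa [show a + 3 + (i - (a+3)) = i by omega] at this

lemma eperm_UD {a t : ℕ} (h : a + 3 + t = n) (σ : Equiv.Perm (Fin t)) (hσ : UD σ) :
    UD (eperm a t h σ) := by
  intro i h1 h2
  rcases Nat.lt_or_ge i a with hlo | hge
  · exfalso
    rcases Nat.lt_or_ge (i+1) a with hh | hh
    · rw [pad_eperm_lo h σ hlo, pad_eperm_lo h σ hh] at h2; omega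
    · have hia : i + 1 = a := by omega
      rw [pad_eperm_lo h σ hlo, hia, pad_eperm_mid h σ (le_refl a) (by omega)] at h2
      omega
  · rcases Nat.lt_or_ge i (a+3) with hmid | hhi
    · rcases Nat.lt_or_ge (i+1) (a+3) with hm2 | hm2
      · rw [pad_eperm_mid h σ hge hmid, pad_eperm_mid h σ (by omega) hm2]
        omega
      · exfalso
        have hia : i = a + 2 := by omega
        subst hia
        have ht : (0:ℕ) < t := by omega
        have em : pad (eperm a t h σ) (a+2) = a := by
          rw [pad_eperm_mid h σ (show a ≤ a+2 by omega) (show a+2 < a+3 by omega)]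
          omega
        have eh : pad (eperm a t h σ) (a+2+1) = a + 3 + pad σ 0 := by
          rw [show a+2+1 = a+3+0 by omega]
          exact pad_eperm_hi h σ ht
        rw [em, eh] at h2
        omega
    · have hk : i - (a+3) + 1 < t := by omega
      have e1 : pad (eperm a t h σ) i = a + 3 + pad σ (i - (a+3)) :=
        pad_eperm_hi' h σ hhi (by omega)
      have e2 : pad (eperm a t h σ) (i+1) = a + 3 + pad σ (i - (a+3) + 1) := by
        have := pad_eperm_hi' h σ (i := i+1) (by omega) (by omega)
        rwa [show i + 1 - (a+3) = i - (a+3) + 1 by omega] at this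
      rw [e1, e2] at h2 ⊢
      have := hσ (i - (a+3)) hk (by omega)
      omega

lemma eperm_dsc_cases {a t : ℕ} (h : a + 3 + t = n) (σ : Equiv.Perm (Fin t)) {i : ℕ}
    (hd : Dsc (eperm a t h σ) i) :
    i = a ∨ i = a + 1 ∨ (a + 3 ≤ i ∧ Dsc σ (i - (a+3))) := by
  obtain ⟨h1, h2⟩ := hd
  rcases Nat.lt_or_ge i a with hlo | hge
  · exfalso
    rcases Nat.lt_or_ge (i+1) a with hh | hh
    · rw [pad_eperm_lo h σ hlo, pad_eperm_lo h σ hh] at h2; omega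
    · have hia : i + 1 = a := by omega
      rw [pad_eperm_lo h σ hlo, hia, pad_eperm_mid h σ (le_refl a) (by omega)] at h2
      omega
  · rcases Nat.lt_or_ge i (a+3) with hmid | hhi
    · rcases Nat.lt_or_ge (i+1) (a+3) with hm2 | hm2
      · omega
      · exfalso
        have hia : i = a + 2 := by omega
        subst hia
        have ht : (0:ℕ) < t := by omega
        have em : pad (eperm a t h σ) (a+2) = a := by
          rw [pad_eperm_mid h σ (show a ≤ a+2 by omega) (show a+2 < a+3 by omega)]
          omega
        have eh : pad (eperm a t h σ) (a+2+1) = a + 3 + pad σ 0 := by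
          rw [show a+2+1 = a+3+0 by omega]
          exact pad_eperm_hi h σ ht
        rw [em, eh] at h2
        omega
    · have hk : i - (a+3) + 1 < t := by omega
      have e1 : pad (eperm a t h σ) i = a + 3 + pad σ (i - (a+3)) :=
        pad_eperm_hi' h σ hhi (by omega)
      have e2 : pad (eperm a t h σ) (i+1) = a + 3 + pad σ (i - (a+3) + 1) := by
        have := pad_eperm_hi' h σ (i := i+1) (by omega) (by omega)
        rwa [show i + 1 - (a+3) = i - (a+3) + 1 by omega] at this
      rw [e1, e2] at h2
      exact Or.inr (Or.inr ⟨hhi, hk, by omega⟩)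

lemma eperm_double {a t : ℕ} (h : a + 3 + t = n) (σ : Equiv.Perm (Fin t))
    (hσd : NoDouble σ) {j : ℕ} (d1 : Dsc (eperm a t h σ) j)
    (d2 : Dsc (eperm a t h σ) (j+1)) : j = a := by
  rcases eperm_dsc_cases h σ d1 with rfl | rfl | ⟨hge1, hd1⟩
  · rfl
  · exfalso
    rcases eperm_dsc_cases h σ d2 with he | he | ⟨hge2, _⟩ <;> omega
  · exfalso
    rcases eperm_dsc_cases h σ d2 with he | he | ⟨hge2, hd2⟩
    · omega
    · omega
    · rw [show j + 1 - (a+3) = j - (a+3) + 1 by omega] at hd2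
      exact hσd (j - (a+3)) ⟨hd1, hd2⟩

lemma sigma_facts {t : ℕ} (σ : Equiv.Perm (Fin t))
    (hσ : AvoidsAll σ [[2,3,1],[3,1,2],[3,2,1]]) : UD σ ∧ NoDouble σ := by
  have hUD : UD σ := (ud_iff σ).1 ⟨hσ _ (by simp), hσ _ (by simp)⟩
  exact ⟨hUD, (noDouble_iff hUD).2 (hσ _ (by simp))⟩

lemma eperm_avoids {a t : ℕ} (h : a + 3 + t = n) (σ : Equiv.Perm (Fin t))
    (hσ : AvoidsAll σ [[2,3,1],[3,1,2],[3,2,1]]) :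
    AvoidsAll (eperm a t h σ) [[2,3,1],[3,1,2],[4,3,2,1],[2,1,5,4,3]] := by
  obtain ⟨hσUD, hσD⟩ := sigma_facts σ hσ
  have hUD : UD (eperm a t h σ) := eperm_UD h σ hσUD
  have hB : NoTriple (eperm a t h σ) := by
    rintro m ⟨dm, dm1, dm2⟩
    have e1 := eperm_double h σ hσD dm dm1
    have e2 := eperm_double h σ hσD dm1 dm2
    omega
  have hW : NoW (eperm a t h σ) := by
    rintro i j hij ⟨di, dj, dj1⟩
    have e1 := eperm_double h σ hσD dj dj1
    rcases eperm_dsc_cases h σ di with he | he | ⟨hge, _⟩ <;> omega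
  intro p hp
  simp only [List.mem_cons, List.not_mem_nil, or_false] at hp
  obtain ⟨hn231, hn312⟩ := (ud_iff (eperm a t h σ)).2 hUD
  rcases hp with rfl | rfl | rfl | rfl
  · exact hn231
  · exact hn312
  · exact (noTriple_iff hUD).1 hB
  · exact (noW_iff hUD hB).1 hW

lemma fibStat_eq_of {π : Equiv.Perm (Fin n)} {t' : ℕ} (h1 : IsFinalFib π t')
    (h2 : ∀ k, IsFinalFib π k → k ≤ t') : fibStat π = t' :=
  le_antisymm (csSup_le ⟨t', h1⟩ h2) (le_csSup ⟨n, fun _ hk => hk.1⟩ h1)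

lemma eperm_contains321 {a t : ℕ} (h : a + 3 + t = n) (σ : Equiv.Perm (Fin t)) :
    ContainsPat (eperm a t h σ) [3,2,1] := by
  have e0 : pad (eperm a t h σ) a = a + 2 := by
    rw [pad_eperm_mid h σ le_rfl (by omega)]; omega
  have e1 : pad (eperm a t h σ) (a+1) = a + 1 := by
    rw [pad_eperm_mid h σ (by omega) (by omega)]; omega
  have e2 : pad (eperm a t h σ) (a+2) = a := by
    rw [pad_eperm_mid h σ (by omega) (by omega)]; omega
  exact (containsPat3_iff _ 3 2 1 (by norm_num) (by norm_num) (by norm_num)).2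
    ⟨a, a+1, a+2, by omega, by omega, by omega, by omega, by omega, by omega⟩

lemma seg_transfer {a t : ℕ} (h : a + 3 + t = n) (σ : Equiv.Perm (Fin t))
    (x y z : ℕ) (hxy : x ≠ y) (hxz : x ≠ z) (hyz : y ≠ z)
    (hc : SegContainsPat (eperm a t h σ) t [x,y,z]) : ContainsPat σ [x,y,z] := by
  obtain ⟨i, j, k, hbd, hij, hjk, hkn, c1, c2, c3⟩ :=
    (segContainsPat3_iff (eperm a t h σ) t x y z hxy hxz hyz).1 hc
  have hia : a + 3 ≤ i := by omega
  have ei : pad (eperm a t h σ) i = a + 3 + pad σ (i - (a+3)) :=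
    pad_eperm_hi' h σ hia (by omega)
  have ej : pad (eperm a t h σ) j = a + 3 + pad σ (j - (a+3)) :=
    pad_eperm_hi' h σ (by omega) (by omega)
  have ek : pad (eperm a t h σ) k = a + 3 + pad σ (k - (a+3)) :=
    pad_eperm_hi' h σ (by omega) hkn
  exact (containsPat3_iff σ x y z hxy hxz hyz).2
    ⟨i - (a+3), j - (a+3), k - (a+3), by omega, by omega, by omega,
      by omega, by omega, by omega⟩

lemma fibStat_eperm {a t : ℕ} (h : a + 3 + t = n) (σ : Equiv.Perm (Fin t))
    (hσ : AvoidsAll σ [[2,3,1],[3,1,2],[3,2,1]]) :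
    fibStat (eperm a t h σ) = t := by
  have e2 : pad (eperm a t h σ) (a+2) = a := by
    rw [pad_eperm_mid h σ (by omega) (by omega)]; omega
  apply fibStat_eq_of
  · refine ⟨by omega, ?_, ?_⟩
    · intro i hi
      have hnt : n - t = a + 3 := by omega
      have := pad_eperm_hi' h σ (i := (i:ℕ)) (by omega) i.isLt
      rw [val_eq_pad]
      omega
    · intro p hp
      simp only [List.mem_cons, List.not_mem_nil, or_false] at hp
      rcases hp with rfl | rfl | rfl
      · exact fun hs => hσ _ (by simp)
          (seg_transfer h σ 2 3 1 (by norm_num) (by norm_num) (by norm_num) hs)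
      · exact fun hs => hσ _ (by simp)
          (seg_transfer h σ 3 1 2 (by norm_num) (by norm_num) (by norm_num) hs)
      · exact fun hs => hσ _ (by simp)
          (seg_transfer h σ 3 2 1 (by norm_num) (by norm_num) (by norm_num) hs)
  · intro k hk
    by_contra hlt
    push_neg at hlt
    have hkn : k ≤ n := hk.1
    rcases Nat.lt_or_ge k (t+3) with hsm | hbg
    · -- k = t+1 or t+2 : position a+2 has value a < n - k
      have htop := hk.2.1 ⟨a+2, by omega⟩ (by simp; omega)
      rw [val_eq_pad] at htop
      simp only [e2] at htop
      omega
    · -- k ≥ t+3 : segment contains 321 at a, a+1, a+2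
      have e0 : pad (eperm a t h σ) a = a + 2 := by
        rw [pad_eperm_mid h σ le_rfl (by omega)]; omega
      have e1 : pad (eperm a t h σ) (a+1) = a + 1 := by
        rw [pad_eperm_mid h σ (by omega) (by omega)]; omega
      apply hk.2.2 [3,2,1] (by simp)
      exact (segContainsPat3_iff _ k 3 2 1 (by norm_num) (by norm_num) (by norm_num)).2
        ⟨a, a+1, a+2, by omega, by omega, by omega, by omega, by omega, by omega, by omega⟩

lemma invNum_eperm {a t : ℕ} (h : a + 3 + t = n) (σ : Equiv.Perm (Fin t)) :
    invNum (eperm a t h σ) = invNum σ + 3 := by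
  classical
  have han : a + 2 < n := by omega
  let emb : Fin t × Fin t ↪ Fin n × Fin n :=
    ⟨fun q => (⟨a+3+(q.1:ℕ), by have := q.1.isLt; omega⟩,
               ⟨a+3+(q.2:ℕ), by have := q.2.isLt; omega⟩), by
      rintro ⟨u1,u2⟩ ⟨v1,v2⟩ hq
      simp only [Prod.mk.injEq, Fin.mk.injEq] at hq
      rw [Prod.mk.injEq]
      constructor <;> (apply Fin.ext; omega)⟩
  have key : (Finset.univ.filter fun p : Fin n × Fin n =>
        p.1 < p.2 ∧ (eperm a t h σ) p.2 < (eperm a t h σ) p.1)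
      = ((Finset.univ.filter fun q : Fin t × Fin t => q.1 < q.2 ∧ σ q.2 < σ q.1).map emb)
        ∪ {(⟨a, by omega⟩, ⟨a+1, by omega⟩), (⟨a, by omega⟩, ⟨a+2, han⟩),
           (⟨a+1, by omega⟩, ⟨a+2, han⟩)} := by
    ext ⟨u, v⟩
    simp only [Finset.mem_filter, Finset.mem_univ, true_and, Finset.mem_union,
      Finset.mem_map, Finset.mem_insert, Finset.mem_singleton,
      Function.Embedding.coeFn_mk, emb]
    constructor
    · rintro ⟨huv, hvu⟩
      rw [Fin.lt_def] at huv
      rw [Fin.lt_def, val_eq_pad, val_eq_pad] at hvu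
      by_cases hu3 : a + 3 ≤ (u:ℕ)
      · have hv3 : a + 3 ≤ (v:ℕ) := by omega
        left
        have eu : pad (eperm a t h σ) (u:ℕ) = a + 3 + pad σ ((u:ℕ) - (a+3)) :=
          pad_eperm_hi' h σ hu3 u.isLt
        have ev : pad (eperm a t h σ) (v:ℕ) = a + 3 + pad σ ((v:ℕ) - (a+3)) :=
          pad_eperm_hi' h σ hv3 v.isLt
        have hut : (u:ℕ) - (a+3) < t := by have := u.isLt; omega
        have hvt : (v:ℕ) - (a+3) < t := by have := v.isLt; omega
        refine ⟨(⟨(u:ℕ)-(a+3), hut⟩, ⟨(v:ℕ)-(a+3), hvt⟩), ⟨?_, ?_⟩, ?_⟩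
        · rw [Fin.lt_def]; simp; omega
        · rw [Fin.lt_def, val_eq_pad, val_eq_pad]
          simp only [Fin.val_mk]
          rw [show pad σ ((u:ℕ)-(a+3)) = pad σ ((u:ℕ)-(a+3)) from rfl]
          omega
        · rw [Prod.mk.injEq]
          constructor <;> (apply Fin.ext; show a + 3 + (_ - (a+3)) = _; omega)
      · by_cases hu0 : (u:ℕ) < a
        · exfalso
          have eu : pad (eperm a t h σ) (u:ℕ) = u := pad_eperm_lo h σ hu0
          by_cases hv0 : (v:ℕ) < a
          · rw [eu, pad_eperm_lo h σ hv0] at hvu; omega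
          · by_cases hv3 : a + 3 ≤ (v:ℕ)
            · have := pad_eperm_hi' h σ hv3 v.isLt; omega
            · rw [eu, pad_eperm_mid h σ (by omega) (by omega)] at hvu; omega
        · by_cases hv3 : a + 3 ≤ (v:ℕ)
          · exfalso
            have eu : pad (eperm a t h σ) (u:ℕ) = 2*a+2 - (u:ℕ) :=
              pad_eperm_mid h σ (by omega) (by omega)
            have := pad_eperm_hi' h σ hv3 v.isLt
            omega
          · right
            have hcase : ((u:ℕ) = a ∧ (v:ℕ) = a+1) ∨ ((u:ℕ) = a ∧ (v:ℕ) = a+2)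
                ∨ ((u:ℕ) = a+1 ∧ (v:ℕ) = a+2) := by omega
            rcases hcase with ⟨h1, h2⟩ | ⟨h1, h2⟩ | ⟨h1, h2⟩
            · left; rw [Prod.mk.injEq]
              constructor <;> (apply Fin.ext; simp only [Fin.val_mk]; omega)
            · right; left; rw [Prod.mk.injEq]
              constructor <;> (apply Fin.ext; simp only [Fin.val_mk]; omega)
            · right; right; rw [Prod.mk.injEq]
              constructor <;> (apply Fin.ext; simp only [Fin.val_mk]; omega)
    · intro hyp
      have hmidval : ∀ w : ℕ, a ≤ w → w < a + 3 →
          pad (eperm a t h σ) w = 2*a+2 - w := fun w hw1 hw2 => pad_eperm_mid h σ hw1 hw2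
      rcases hyp with ⟨⟨q1, q2⟩, ⟨hqlt, hqinv⟩, hqe⟩ | heq | heq | heq
      · rw [Prod.mk.injEq] at hqe
        obtain ⟨he1, he2⟩ := hqe
        dsimp only at hqlt hqinv he1 he2
        rw [Fin.lt_def] at hqlt ⊢
        rw [Fin.lt_def, val_eq_pad, val_eq_pad] at hqinv
        have hu : (u:ℕ) = a + 3 + (q1:ℕ) := by rw [← he1]; rfl
        have hv : (v:ℕ) = a + 3 + (q2:ℕ) := by rw [← he2]; rfl
        constructor
        · omega
        · rw [Fin.lt_def, val_eq_pad, val_eq_pad, hu, hv,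
            pad_eperm_hi h σ q1.isLt, pad_eperm_hi h σ q2.isLt]
          omega
      all_goals (
        rw [Prod.mk.injEq] at heq
        obtain ⟨he1, he2⟩ := heq
        have hu : (u:ℕ) = _ := congrArg Fin.val he1
        have hv : (v:ℕ) = _ := congrArg Fin.val he2
        dsimp only at hu hv
        constructor
        · rw [Fin.lt_def]; omega
        · rw [Fin.lt_def, val_eq_pad, val_eq_pad, hu, hv]
          rw [hmidval _ (by omega) (by omega), hmidval _ (by omega) (by omega)]
          omega)
  rw [invNum, key, Finset.card_union_of_disjoint, Finset.card_map]
  · have c3 : ({(⟨a, by omega⟩, ⟨a+1, by omega⟩), (⟨a, by omega⟩, ⟨a+2, han⟩),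
        (⟨a+1, by omega⟩, ⟨a+2, han⟩)} : Finset (Fin n × Fin n)).card = 3 := by
      rw [Finset.card_insert_of_notMem, Finset.card_insert_of_notMem,
        Finset.card_singleton]
      · simp only [Finset.mem_singleton, Prod.mk.injEq, Fin.mk.injEq]
        omega
      · simp only [Finset.mem_insert, Finset.mem_singleton, Prod.mk.injEq, Fin.mk.injEq]
        omega
    rw [c3, invNum]
  · rw [Finset.disjoint_left]
    rintro ⟨u, v⟩ hmem htri
    simp only [Finset.mem_map, Function.Embedding.coeFn_mk, emb] at hmem
    obtain ⟨⟨q1, q2⟩, _, hqe⟩ := hmem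
    rw [Prod.mk.injEq] at hqe
    have hu : (u:ℕ) = a + 3 + (q1:ℕ) := by rw [← hqe.1]; rfl
    simp only [Finset.mem_insert, Finset.mem_singleton, Prod.mk.injEq] at htri
    rcases htri with ⟨he1, _⟩ | ⟨he1, _⟩ | ⟨he1, _⟩ <;>
      (have := congrArg Fin.val he1; simp at this; omega)

lemma avoidsAll4_iff (π : Equiv.Perm (Fin n)) :
    AvoidsAll π [[2,3,1],[3,1,2],[4,3,2,1],[2,1,5,4,3]] ↔ (UD π ∧ NoTriple π ∧ NoW π) := by
  constructor
  · intro hA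
    have hUD : UD π := (ud_iff π).1 ⟨hA _ (by simp), hA _ (by simp)⟩
    have hB : NoTriple π := (noTriple_iff hUD).2 (hA _ (by simp))
    exact ⟨hUD, hB, (noW_iff hUD hB).2 (hA _ (by simp))⟩
  · rintro ⟨hUD, hB, hW⟩ p hp
    simp only [List.mem_cons, List.not_mem_nil, or_false] at hp
    obtain ⟨hn231, hn312⟩ := (ud_iff π).2 hUD
    rcases hp with rfl | rfl | rfl | rfl
    · exact hn231
    · exact hn312
    · exact (noTriple_iff hUD).1 hB
    · exact (noW_iff hUD hB).1 hW

lemma avoidsAll3_iff (π : Equiv.Perm (Fin n)) :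
    AvoidsAll π [[2,3,1],[3,1,2],[3,2,1]] ↔ (UD π ∧ NoDouble π) := by
  constructor
  · intro hA
    have hUD : UD π := (ud_iff π).1 ⟨hA _ (by simp), hA _ (by simp)⟩
    exact ⟨hUD, (noDouble_iff hUD).2 (hA _ (by simp))⟩
  · rintro ⟨hUD, hD⟩ p hp
    simp only [List.mem_cons, List.not_mem_nil, or_false] at hp
    obtain ⟨hn231, hn312⟩ := (ud_iff π).2 hUD
    rcases hp with rfl | rfl | rfl
    · exact hn231
    · exact hn312
    · exact (noDouble_iff hUD).1 hD

lemma fibStat_of_fib (π : Equiv.Perm (Fin n))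
    (hA : AvoidsAll π [[2,3,1],[3,1,2],[3,2,1]]) : fibStat π = n := by
  apply fibStat_eq_of
  · refine ⟨le_rfl, fun i _ => by omega, ?_⟩
    intro p hp hseg
    obtain ⟨f, hf, hbd, hcond⟩ := hseg
    exact hA p hp ⟨f, hf, hcond⟩
  · exact fun k hk => hk.1

lemma structure_thm {π : Equiv.Perm (Fin n)}
    (hA : AvoidsAll π [[2,3,1],[3,1,2],[4,3,2,1],[2,1,5,4,3]])
    (hc : ContainsPat π [3,2,1]) :
    ∃ (a t : ℕ) (h : a + 3 + t = n) (σ : Equiv.Perm (Fin t)),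
      AvoidsAll σ [[2,3,1],[3,1,2],[3,2,1]] ∧ eperm a t h σ = π := by
  obtain ⟨hUD, hB, hW⟩ := (avoidsAll4_iff π).1 hA
  have hdd : ∃ m, Dsc π m ∧ Dsc π (m+1) := by
    by_contra hnd
    push_neg at hnd
    exact ((noDouble_iff hUD).1 (fun m hm => (hnd m hm.1) hm.2)) hc
  obtain ⟨a, da, da1⟩ := hdd
  have ha2n : a + 2 < n := da1.1
  have hUDa : pad π a = pad π (a+1) + 1 := hUD a da.1 da.2
  have hUDa1 : pad π (a+1) = pad π (a+2) + 1 := hUD (a+1) da1.1 da1.2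
  have hnd : ∀ i, i < a → ¬ Dsc π i := fun i hia hdi => hW i a hia ⟨hdi, da, da1⟩
  have hasc : ∀ i, i < a → pad π i < pad π (i+1) := by
    intro i hia
    have h1 : i + 1 < n := by omega
    have hne : pad π i ≠ pad π (i+1) := fun hh => by have := pad_inj π hh; omega
    by_contra hlt
    push_neg at hlt
    exact hnd i hia ⟨h1, by omega⟩
  have hid : ∀ i, i < a → pad π i = i := by
    intro i
    induction i using Nat.strong_induction_on with
    | _ i ih =>
      intro hia
      have hlow : ∀ i', i' < i → pad π i' = i' := fun i' h' => ih i' h' (by omega)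
      have hge : i ≤ pad π i := by
        by_contra hlt
        push_neg at hlt
        have h1 := hlow (pad π i) hlt
        have h2 := pad_inj π h1
        omega
      rcases Nat.eq_or_lt_of_le hge with heq | hlt
      · exact heq.symm
      · exfalso
        obtain ⟨w, hwn, hww⟩ := pad_surj π (show i < n by omega)
        have hwlow : ¬ w < i := fun hwl => by have := hlow w hwl; omega
        have hwi : w ≠ i := fun hh => by subst hh; omega
        have := lemmaM hUD (show i+1 < n by omega) (hasc i hia) w (by omega) hwn
        omega
  have hF5 : ∀ l, a ≤ l → l < n → a ≤ pad π l := by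
    intro l hal hln
    by_contra hlt
    push_neg at hlt
    have h1 := hid (pad π l) (by omega)
    have h2 := pad_inj π h1
    omega
  have hnd2 : ¬ Dsc π (a+2) := fun hd2 => hB a ⟨da, da1, by
    rw [show a+1+1 = a+2 from rfl]; exact hd2⟩
  have hpa2 : pad π (a+2) = a := by
    have hge : a ≤ pad π (a+2) := hF5 _ (by omega) (by omega)
    rcases Nat.eq_or_lt_of_le hge with heq | hlt
    · exact heq.symm
    · exfalso
      obtain ⟨w, hwn, hww⟩ := pad_surj π (show a < n by omega)
      have hwnota : ¬ w < a := fun hwl => by have := hid w hwl; omega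
      have hw0 : w ≠ a := fun hh => by subst hh; omega
      have hw1 : w ≠ a+1 := fun hh => by subst hh; omega
      have hw2 : w ≠ a+2 := fun hh => by subst hh; omega
      have hwgt : a + 2 < w := by omega
      have h3n : a + 3 < n := by omega
      have hne : pad π (a+2) ≠ pad π (a+2+1) := fun hh => by have := pad_inj π hh; omega
      have hasc2 : pad π (a+2) < pad π (a+2+1) := by
        by_contra hlt2
        push_neg at hlt2
        exact hnd2 ⟨by omega, by omega⟩
      have := lemmaM hUD (show a+2+1 < n by omega) hasc2 w hwgt hwn
      omega
  have hpa1 : pad π (a+1) = a+1 := by omega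
  have hpa0 : pad π a = a+2 := by omega
  have hF7 : ∀ l, a+3 ≤ l → l < n → a+3 ≤ pad π l := by
    intro l h1 h2
    have hge : a ≤ pad π l := hF5 l (by omega) h2
    have n0 : pad π l ≠ pad π (a+2) := fun hh => by have := pad_inj π hh; omega
    have n1 : pad π l ≠ pad π (a+1) := fun hh => by have := pad_inj π hh; omega
    have n2 : pad π l ≠ pad π a := fun hh => by have := pad_inj π hh; omega
    omega
  have htail_nodouble : ∀ j, a < j → ¬ (Dsc π j ∧ Dsc π (j+1)) :=
    fun j haj ⟨dj, dj1⟩ => hW a j haj ⟨da, dj, dj1⟩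
  have h3 : a + 3 ≤ n := by omega
  set t := n - (a+3) with ht
  have htn : a + 3 + t = n := by omega
  have hbd1 : ∀ k : Fin t, pad π (a+3+(k:ℕ)) - (a+3) < t := by
    intro k
    have h1 := pad_lt π (show a+3+(k:ℕ) < n by have := k.isLt; omega)
    have h2 := hF7 (a+3+(k:ℕ)) (by omega) (by have := k.isLt; omega)
    omega
  have hinvlow : ∀ v, a+3 ≤ v → v < n → a+3 ≤ pad π⁻¹ v := by
    intro v h1 h2
    by_contra hlt
    push_neg at hlt
    have hpp := pad_pad_inv π h2
    rcases Nat.lt_or_ge (pad π⁻¹ v) a with hw | hw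
    · rw [hid _ hw] at hpp; omega
    · have hcase : pad π⁻¹ v = a ∨ pad π⁻¹ v = a+1 ∨ pad π⁻¹ v = a+2 := by omega
      rcases hcase with he | he | he <;> rw [he] at hpp <;> omega
  have hbd2 : ∀ k : Fin t, pad π⁻¹ (a+3+(k:ℕ)) - (a+3) < t := by
    intro k
    have hv : a+3+(k:ℕ) < n := by have := k.isLt; omega
    have h1 := pad_lt π⁻¹ hv
    have h2 := hinvlow (a+3+(k:ℕ)) (by omega) hv
    omega
  set σ : Equiv.Perm (Fin t) :=
    { toFun := fun k => ⟨pad π (a+3+(k:ℕ)) - (a+3), hbd1 k⟩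
      invFun := fun k => ⟨pad π⁻¹ (a+3+(k:ℕ)) - (a+3), hbd2 k⟩
      left_inv := by
        intro k
        apply Fin.ext
        dsimp only
        have hv : a+3+(k:ℕ) < n := by have := k.isLt; omega
        have h1 : a+3 ≤ pad π (a+3+(k:ℕ)) := hF7 _ (by omega) hv
        rw [show a+3+(pad π (a+3+(k:ℕ)) - (a+3)) = pad π (a+3+(k:ℕ)) by omega]
        rw [pad_inv_pad π hv]
        omega
      right_inv := by
        intro k
        apply Fin.ext
        dsimp only
        have hv : a+3+(k:ℕ) < n := by have := k.isLt; omega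
        have h1 : a+3 ≤ pad π⁻¹ (a+3+(k:ℕ)) := hinvlow _ (by omega) hv
        rw [show a+3+(pad π⁻¹ (a+3+(k:ℕ)) - (a+3)) = pad π⁻¹ (a+3+(k:ℕ)) by omega]
        rw [pad_pad_inv π hv]
        omega } with hσdef
  have hps : ∀ k, k < t → pad σ k = pad π (a+3+k) - (a+3) := by
    intro k hk
    rw [pad, dif_pos hk]
    rfl
  have hdsc_transfer : ∀ m, Dsc σ m → Dsc π (a+3+m) := by
    rintro m ⟨hm1, hm2⟩
    rw [hps m (by omega), hps (m+1) hm1] at hm2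
    have e1 := hF7 (a+3+m) (by omega) (by omega)
    have e2 := hF7 (a+3+(m+1)) (by omega) (by omega)
    refine ⟨by omega, ?_⟩
    rw [show a+3+m+1 = a+3+(m+1) by omega]
    omega
  have hσUD : UD σ := by
    intro k hk1 hdk
    have hπd : Dsc π (a+3+k) := hdsc_transfer k ⟨hk1, hdk⟩
    have hu := hUD (a+3+k) hπd.1 hπd.2
    rw [hps k (by omega), hps (k+1) hk1] at hdk ⊢
    have e1 := hF7 (a+3+k) (by omega) (by omega)
    have e2 := hF7 (a+3+(k+1)) (by omega) (by omega)
    rw [show a+3+k+1 = a+3+(k+1) by omega] at hu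
    omega
  have hσND : NoDouble σ := by
    rintro m ⟨d1, d2⟩
    have p1 := hdsc_transfer m d1
    have p2 := hdsc_transfer (m+1) d2
    rw [show a+3+(m+1) = (a+3+m)+1 by omega] at p2
    exact htail_nodouble (a+3+m) (by omega) ⟨p1, p2⟩
  refine ⟨a, t, htn, σ, (avoidsAll3_iff σ).2 ⟨hσUD, hσND⟩, ?_⟩
  apply Equiv.ext
  intro i
  apply Fin.ext
  rw [val_eq_pad, val_eq_pad]
  rcases Nat.lt_or_ge (i:ℕ) a with hlo | hge
  · rw [pad_eperm_lo htn σ hlo, hid _ hlo]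
  · rcases Nat.lt_or_ge (i:ℕ) (a+3) with hmid | hhi
    · have hcase : (i:ℕ) = a ∨ (i:ℕ) = a+1 ∨ (i:ℕ) = a+2 := by omega
      rcases hcase with he | he | he <;>
        rw [he, pad_eperm_mid htn σ (by omega) (by omega)] <;> omega
    · rw [pad_eperm_hi' htn σ hhi i.isLt, hps ((i:ℕ) - (a+3)) (by have := i.isLt; omega)]
      rw [show a+3+((i:ℕ)-(a+3)) = (i:ℕ) by omega]
      have := hF7 (i:ℕ) hhi i.isLt
      omega

end Aux

theorem stmt18 (n : ℕ) (hn : 3 ≤ n) :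
    G n [[2,3,1],[3,1,2],[4,3,2,1],[2,1,5,4,3]] =
      Fq n * X 0 ^ n + ∑ j ∈ Finset.range (n - 2), X 1 ^ 3 * X 0 ^ j * Fq j := by
  classical
  rw [G, ← Finset.sum_filter_add_sum_filter_not
    (Finset.univ.filter (fun π : Equiv.Perm (Fin n) =>
      AvoidsAll π [[2,3,1],[3,1,2],[4,3,2,1],[2,1,5,4,3]]))
    (fun π => ContainsPat π [3,2,1])]
  have hset : ((Finset.univ.filter fun π : Equiv.Perm (Fin n) =>
      AvoidsAll π [[2,3,1],[3,1,2],[4,3,2,1],[2,1,5,4,3]])).filter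
        (fun π => ¬ ContainsPat π [3,2,1])
      = Finset.univ.filter (fun π : Equiv.Perm (Fin n) =>
          AvoidsAll π [[2,3,1],[3,1,2],[3,2,1]]) := by
    ext π
    simp only [Finset.mem_filter, Finset.mem_univ, true_and]
    constructor
    · rintro ⟨hA, hnc⟩
      obtain ⟨hUD, hB, hW⟩ := (avoidsAll4_iff π).1 hA
      exact (avoidsAll3_iff π).2 ⟨hUD, (noDouble_iff hUD).2 hnc⟩
    · intro hF
      obtain ⟨hUD, hD⟩ := (avoidsAll3_iff π).1 hF
      refine ⟨(avoidsAll4_iff π).2 ⟨hUD, ?_, ?_⟩, (noDouble_iff hUD).1 hD⟩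
      · exact fun m hm => hD m ⟨hm.1, hm.2.1⟩
      · exact fun i j hij hm => hD j ⟨hm.2.1, hm.2.2⟩
  have hpart1 : ∑ π ∈ ((Finset.univ.filter fun π : Equiv.Perm (Fin n) =>
      AvoidsAll π [[2,3,1],[3,1,2],[4,3,2,1],[2,1,5,4,3]])).filter
        (fun π => ¬ ContainsPat π [3,2,1]),
      (X 0 ^ fibStat π * X 1 ^ invNum π : MvPolynomial (Fin 2) ℤ) = Fq n * X 0 ^ n := by
    rw [hset, Fq, Finset.sum_mul]
    apply Finset.sum_congr rfl
    intro π hπ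
    rw [Finset.mem_filter] at hπ
    rw [fibStat_of_fib π hπ.2]
    ring
  have hpart2 : ∑ π ∈ ((Finset.univ.filter fun π : Equiv.Perm (Fin n) =>
      AvoidsAll π [[2,3,1],[3,1,2],[4,3,2,1],[2,1,5,4,3]])).filter
        (fun π => ContainsPat π [3,2,1]),
      (X 0 ^ fibStat π * X 1 ^ invNum π : MvPolynomial (Fin 2) ℤ)
      = ∑ j ∈ Finset.range (n - 2), X 1 ^ 3 * X 0 ^ j * Fq j := by
    have hrhs : ∑ j ∈ Finset.range (n-2), (X 1 ^ 3 * X 0 ^ j * Fq j : MvPolynomial (Fin 2) ℤ)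
        = ∑ x ∈ (Finset.range (n-2)).sigma (fun j => Finset.univ.filter
            (fun σ : Equiv.Perm (Fin j) => AvoidsAll σ [[2,3,1],[3,1,2],[3,2,1]])),
            X 1 ^ 3 * X 0 ^ x.1 * X 1 ^ invNum x.2 := by
      rw [Finset.sum_sigma]
      apply Finset.sum_congr rfl
      intro j hj
      rw [Fq, Finset.mul_sum]
    rw [hrhs]
    have hpf : ∀ x : Σ j : ℕ, Equiv.Perm (Fin j), x ∈ (Finset.range (n-2)).sigma
        (fun j => Finset.univ.filter
          (fun σ : Equiv.Perm (Fin j) => AvoidsAll σ [[2,3,1],[3,1,2],[3,2,1]])) →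
        (n - 3 - x.1) + 3 + x.1 = n := by
      intro x hx
      have := (Finset.mem_sigma.1 hx).1
      rw [Finset.mem_range] at this
      omega
    have havd : ∀ x : Σ j : ℕ, Equiv.Perm (Fin j), x ∈ (Finset.range (n-2)).sigma
        (fun j => Finset.univ.filter
          (fun σ : Equiv.Perm (Fin j) => AvoidsAll σ [[2,3,1],[3,1,2],[3,2,1]])) →
        AvoidsAll x.2 [[2,3,1],[3,1,2],[3,2,1]] := by
      intro x hx
      have := (Finset.mem_sigma.1 hx).2
      rw [Finset.mem_filter] at this
      exact this.2
    refine (Finset.sum_bij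
      (fun x hx => eperm (n - 3 - x.1) x.1 (hpf x hx) x.2) ?_ ?_ ?_ ?_).symm
    · intro x hx
      simp only [Finset.mem_filter, Finset.mem_univ, true_and]
      exact ⟨eperm_avoids (hpf x hx) x.2 (havd x hx), eperm_contains321 (hpf x hx) x.2⟩
    · rintro ⟨t1, σ1⟩ hx ⟨t2, σ2⟩ hy he
      have he' : eperm (n - 3 - t1) t1 (hpf ⟨t1, σ1⟩ hx) σ1
          = eperm (n - 3 - t2) t2 (hpf ⟨t2, σ2⟩ hy) σ2 := he
      have ht1 : fibStat (eperm (n - 3 - t1) t1 (hpf ⟨t1, σ1⟩ hx) σ1) = t1 :=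
        fibStat_eperm _ σ1 (havd ⟨t1, σ1⟩ hx)
      have ht2 : fibStat (eperm (n - 3 - t2) t2 (hpf ⟨t2, σ2⟩ hy) σ2) = t2 :=
        fibStat_eperm _ σ2 (havd ⟨t2, σ2⟩ hy)
      have htt : t1 = t2 := by rw [← ht1, ← ht2, he']
      subst htt
      have hp1 : (n - 3 - t1) + 3 + t1 = n := hpf ⟨t1, σ1⟩ hx
      have hp2 : (n - 3 - t1) + 3 + t1 = n := hpf ⟨t1, σ2⟩ hy
      have he'' : eperm (n - 3 - t1) t1 hp1 σ1 = eperm (n - 3 - t1) t1 hp2 σ2 := he'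
      have hσ : σ1 = σ2 := by
        apply Equiv.ext
        intro k
        have h1 := congrArg (fun τ => pad τ ((n - 3 - t1) + 3 + (k:ℕ))) he''
        rw [pad_eperm_hi hp1 σ1 k.isLt, pad_eperm_hi hp2 σ2 k.isLt] at h1
        apply Fin.ext
        rw [val_eq_pad, val_eq_pad]
        omega
      rw [hσ]
    · intro π hπ
      rw [Finset.mem_filter, Finset.mem_filter] at hπ
      obtain ⟨⟨-, hA⟩, hc⟩ := hπ
      obtain ⟨a, t, h, σ, havoid, heq⟩ := structure_thm hA hc
      obtain rfl : a = n - 3 - t := by omega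
      have hmem : (⟨t, σ⟩ : Σ j : ℕ, Equiv.Perm (Fin j)) ∈ (Finset.range (n-2)).sigma
          (fun j => Finset.univ.filter
            (fun σ : Equiv.Perm (Fin j) => AvoidsAll σ [[2,3,1],[3,1,2],[3,2,1]])) := by
        rw [Finset.mem_sigma, Finset.mem_range, Finset.mem_filter]
        exact ⟨by show t < n - 2; omega, Finset.mem_univ _, havoid⟩
      exact ⟨⟨t, σ⟩, hmem, heq⟩
    · intro x hx
      rw [fibStat_eperm (hpf x hx) x.2 (havd x hx), invNum_eperm (hpf x hx) x.2]
      rw [pow_add]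
      ring
  rw [hpart1, hpart2]
  ring
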